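/- Let p and q be permutations of {1,...,n} with the same left-to-right minima in the same positions. Then p is indecomposable if and only if q is indecomposable, provided q is the unique 132-avoiding permutation in the class of p. More precisely: a class of permutations (determined by the set and positions of left-to-right minima) consists entirely of decomposable permutations or entirely of indecomposable permutations. -/

import Mathlib

open Finset

private lemma aux_decomp (n k : ℕ) (p q : Equiv.Perm (Fin n))
    (hclass : ∀ i : Fin n,
      ((∀ j : Fin n, j < i → p i < p j) ↔ (∀ j : Fin n, j < i → q i < q j)) ∧
      ((∀ j : Fin n, j < i → p i < p j) → p i = q i))
    (hk1 : 1 ≤ k) (hkn : k < n)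
    (h : ∀ i j : Fin n, (i : ℕ) < k → k ≤ (j : ℕ) → p j < p i) :
    ∀ i j : Fin n, (i : ℕ) < k → k ≤ (j : ℕ) → q j < q i := by
  have hn : 0 < n := lt_of_le_of_lt (Nat.zero_le k) hkn
  set kf : Fin n := ⟨k, hkn⟩ with hkf
  set Pre : Finset (Fin n) := Finset.Iio kf with hPre
  set Suf : Finset (Fin n) := Finset.Ici kf with hSuf
  have hmemPre : ∀ i : Fin n, i ∈ Pre ↔ (i : ℕ) < k := by
    intro i; simp [hPre, hkf, Fin.lt_def, -Fin.val_fin_lt]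
  have hmemSuf : ∀ i : Fin n, i ∈ Suf ↔ k ≤ (i : ℕ) := by
    intro i; simp [hSuf, hkf, Fin.le_def, -Fin.val_fin_le]
  have hPrene : Pre.Nonempty := ⟨⟨0, hn⟩, (hmemPre _).mpr hk1⟩
  -- argmin of p on the prefix
  obtain ⟨i₀, hi₀mem, hi₀min⟩ := Pre.exists_min_image p hPrene
  have hi₀k : (i₀ : ℕ) < k := (hmemPre _).mp hi₀mem
  -- i₀ is a left-to-right minimum of p
  have hLTRp : ∀ j : Fin n, j < i₀ → p i₀ < p j := by
    intro j hj
    have hjk : (j : ℕ) < k := lt_trans hj hi₀k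
    have hle := hi₀min j ((hmemPre _).mpr hjk)
    exact lt_of_le_of_ne hle (fun e => (ne_of_lt hj).symm (p.injective e))
  have hq₀ : p i₀ = q i₀ := (hclass i₀).2 hLTRp
  -- argmin of q on the prefix
  obtain ⟨m, hmmem, hmmin⟩ := Pre.exists_min_image q hPrene
  have hmk : (m : ℕ) < k := (hmemPre _).mp hmmem
  have hLTRq : ∀ j : Fin n, j < m → q m < q j := by
    intro j hj
    have hjk : (j : ℕ) < k := lt_trans hj hmk
    have hle := hmmin j ((hmemPre _).mpr hjk)
    exact lt_of_le_of_ne hle (fun e => (ne_of_lt hj).symm (q.injective e))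
  have hpm : p m = q m := (hclass m).2 ((hclass m).1.mpr hLTRq)
  -- every prefix value of q is at least p i₀
  have hqlow : ∀ i : Fin n, (i : ℕ) < k → p i₀ ≤ q i := by
    intro i hik
    calc p i₀ ≤ p m := hi₀min m hmmem
    _ = q m := hpm
    _ ≤ q i := hmmin i ((hmemPre _).mpr hik)
  -- p maps the suffix onto Iio (p i₀)
  have himg : Suf.image p = Finset.Iio (p i₀) := by
    apply Finset.eq_of_subset_of_card_le
    · intro v hv
      obtain ⟨j, hj, rfl⟩ := Finset.mem_image.mp hv
      exact Finset.mem_Iio.mpr (h i₀ j hi₀k ((hmemSuf _).mp hj))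
    · -- Iio (p i₀) ⊆ image, via card: show card Iio ≤ card image by injecting
      apply Finset.card_le_card
      intro v hv
      have hv' : v < p i₀ := Finset.mem_Iio.mp hv
      refine Finset.mem_image.mpr ⟨p.symm v, ?_, by simp⟩
      rw [hmemSuf]
      by_contra hc
      push_neg at hc
      have := hi₀min (p.symm v) ((hmemPre _).mpr hc)
      simp at this
      exact absurd hv' (not_lt.mpr this)
  -- hence (p i₀ : ℕ) = n - k
  have hcardSuf : Suf.card = n - k := by rw [hSuf, Fin.card_Ici]
  have hval : ((p i₀ : Fin n) : ℕ) = n - k := by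
    have h1 : (Suf.image p).card = Suf.card := Finset.card_image_of_injective _ p.injective
    have h2 : (Finset.Iio (p i₀)).card = ((p i₀ : Fin n) : ℕ) := Fin.card_Iio _
    rw [himg, h2] at h1
    rw [h1, hcardSuf]
  -- q maps the prefix onto Ici (p i₀)
  have hqimg : Pre.image q = Finset.Ici (p i₀) := by
    apply Finset.eq_of_subset_of_card_le
    · intro v hv
      obtain ⟨i, hi, rfl⟩ := Finset.mem_image.mp hv
      exact Finset.mem_Ici.mpr (hqlow i ((hmemPre _).mp hi))
    · rw [Finset.card_image_of_injective _ q.injective, Fin.card_Ici, hval, hPre,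
        Fin.card_Iio]
      simp only [hkf, Fin.val_mk]
      omega
  intro i j hik hkj
  have hqi : p i₀ ≤ q i := hqlow i hik
  have hqj : q j < p i₀ := by
    by_contra hc
    push_neg at hc
    have : q j ∈ Pre.image q := hqimg ▸ Finset.mem_Ici.mpr hc
    obtain ⟨x, hx, hxe⟩ := Finset.mem_image.mp this
    have : x = j := q.injective hxe
    subst this
    have := (hmemPre _).mp hx
    omega
  exact lt_of_lt_of_le hqj hqi

/-- A class of permutations of `{1,...,n}` (determined by the set and
positions of the left-to-right minima) consists entirely of decomposable
permutations or entirely of indecomposable permutations: if `p` and `q`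
have the same left-to-right minima in the same positions, then `p` is
decomposable if and only if `q` is. -/
theorem decomposable_iff_of_same_class (n : ℕ) (p q : Equiv.Perm (Fin n))
    (hclass : ∀ i : Fin n,
      ((∀ j : Fin n, j < i → p i < p j) ↔ (∀ j : Fin n, j < i → q i < q j)) ∧
      ((∀ j : Fin n, j < i → p i < p j) → p i = q i)) :
    (∃ k : ℕ, 1 ≤ k ∧ k < n ∧
        ∀ i j : Fin n, (i : ℕ) < k → k ≤ (j : ℕ) → p j < p i) ↔
      (∃ k : ℕ, 1 ≤ k ∧ k < n ∧
        ∀ i j : Fin n, (i : ℕ) < k → k ≤ (j : ℕ) → q j < q i) := by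
  have hclass' : ∀ i : Fin n,
      ((∀ j : Fin n, j < i → q i < q j) ↔ (∀ j : Fin n, j < i → p i < p j)) ∧
      ((∀ j : Fin n, j < i → q i < q j) → q i = p i) := by
    intro i
    exact ⟨(hclass i).1.symm, fun hq => ((hclass i).2 ((hclass i).1.mpr hq)).symm⟩
  constructor
  · rintro ⟨k, hk1, hkn, h⟩
    exact ⟨k, hk1, hkn, aux_decomp n k p q hclass hk1 hkn h⟩
  · rintro ⟨k, hk1, hkn, h⟩
    exact ⟨k, hk1, hkn, aux_decomp n k q p hclass' hk1 hkn h⟩
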